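/- (Theorem 2, minimum invariance, lower-bound direction.) For every Markov policy π, every 0 ≤ k ≤ N and every x ∈ X, the policy safety value satisfies V_k^π(x) ≥ W_k^min(x), where V_k^π(x) = P_{k,x}^π( x_j ∈ A for all k ≤ j ≤ N ) and W_k^min are the minimal DP value functions. Consequently inf_{π} V_k^π(x) ≥ W_k^min(x). -/

import Mathlib

open MeasureTheory ProbabilityTheory Set

noncomputable section

namespace StochasticSafety

variable {X U : Type*} [MeasurableSpace X] [MeasurableSpace U]

/-- A Markov policy: a sequence of (Borel-)measurable maps from states to actions. -/
structure Policy (X U : Type*) [MeasurableSpace X] [MeasurableSpace U] where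
  act : ℕ → X → U
  measurable_act : ∀ k, Measurable (act k)

/-- The closed-loop kernel `κ_k^π(·|x) = T(·|x, μ_k(x))` of a policy at time `k`. -/
def Policy.kernel (T : Kernel (X × U) X) (π : Policy X U) (k : ℕ) : Kernel X X :=
  T.comap (fun x => (x, π.act k x)) (measurable_id.prodMk (π.measurable_act k))

/-- One step of the closed-loop trajectory evolution at time `j`: given the trajectory
built so far, sample `y` from `κ` applied at coordinate `j` and record it at
coordinate `j + 1`. -/
def step (κ : Kernel X X) (j : ℕ) : Kernel (ℕ → X) (ℕ → X) :=
  Kernel.map (Kernel.id ×ₖ κ.comap (fun ω => ω j) (measurable_pi_apply j))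
    (fun p => Function.update p.1 (j + 1) p.2)

/-- Kernel describing `m` steps of the trajectory evolution, starting at time `k`,
under the time-dependent kernels `κ`. -/
def evolve (κ : ℕ → Kernel X X) : ℕ → ℕ → Kernel (ℕ → X) (ℕ → X)
  | _, 0 => Kernel.id
  | k, (m + 1) => (evolve κ (k + 1) m) ∘ₖ step (κ k) k

/-- The law `P_{k,x}^π` of the closed-loop trajectory `(x_k, …, x_N)` started at `x`
at time `k` under policy `π` (finite Ionescu–Tulcea composition of the closed-loop
kernels): the states `x_k, …, x_N` are recorded in coordinates `k, …, N` of `ℕ → X`,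
all other coordinates carry the irrelevant initial value `x`. -/
def trajLaw (T : Kernel (X × U) X) (π : Policy X U) (N k : ℕ) (x : X) :
    Measure (ℕ → X) :=
  evolve (π.kernel T) k (N - k) (fun _ => x)

/-- The event that the trajectory stays in `A` at all times `j` with `k ≤ j ≤ N`. -/
def safeEvent (A : Set X) (k N : ℕ) : Set (ℕ → X) :=
  {ω | ∀ j, k ≤ j → j ≤ N → ω j ∈ A}

/-- The event that the trajectory visits `A` at some time `j` with `k ≤ j ≤ N`. -/
def reachEvent (A : Set X) (k N : ℕ) : Set (ℕ → X) :=
  {ω | ∃ j, k ≤ j ∧ j ≤ N ∧ ω j ∈ A}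


instance (T : Kernel (X × U) X) [IsMarkovKernel T] (π : Policy X U) (k : ℕ) :
    IsMarkovKernel (π.kernel T k) := by
  unfold Policy.kernel; infer_instance

instance (κ : Kernel X X) [IsMarkovKernel κ] (j : ℕ) : IsMarkovKernel (step κ j) :=
  Kernel.IsMarkovKernel.map _ measurable_update'

instance evolve_markov (κ : ℕ → Kernel X X) [∀ i, IsMarkovKernel (κ i)] :
    ∀ (m k : ℕ), IsMarkovKernel (evolve κ k m)
  | 0, _ => by rw [evolve]; infer_instance
  | (m + 1), k => by
      rw [evolve]
      have := evolve_markov κ m (k + 1)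
      infer_instance

lemma step_apply (κ : Kernel X X) [IsMarkovKernel κ] (j : ℕ) (ω : ℕ → X) :
    step κ j ω = (κ (ω j)).map (fun y => Function.update ω (j + 1) y) := by
  rw [step, Kernel.map_apply _ measurable_update', Kernel.prod_apply, Kernel.id_apply,
    Kernel.comap_apply, Measure.dirac_prod,
    Measure.map_map measurable_update' measurable_prodMk_left]
  rfl

lemma measurableSet_safeEvent {A : Set X} (hA : MeasurableSet A) (k N : ℕ) :
    MeasurableSet (safeEvent A k N) := by
  have : safeEvent A k N
      = ⋂ (j : ℕ), ⋂ (_ : k ≤ j), ⋂ (_ : j ≤ N), (fun ω : ℕ → X => ω j) ⁻¹' A := by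
    ext ω; simp [safeEvent]
  rw [this]
  exact MeasurableSet.iInter fun j => MeasurableSet.iInter fun _ =>
    MeasurableSet.iInter fun _ => (measurable_pi_apply j) hA

lemma evolve_coord_ae (κ : ℕ → Kernel X X) [∀ i, IsMarkovKernel (κ i)]
    [MeasurableSingletonClass X] :
    ∀ (m k j : ℕ), j ≤ k → ∀ ω : ℕ → X, ∀ᵐ p ∂(evolve κ k m ω), p j = ω j := by
  intro m
  induction m with
  | zero =>
      intro k j hj ω
      rw [evolve, Kernel.id_apply, MeasureTheory.ae_dirac_eq]
      exact Filter.eventually_pure.2 rfl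
  | succ m ih =>
      intro k j hj ω
      have hS : MeasurableSet {p : ℕ → X | ¬ p j = ω j} := by
        have he : {p : ℕ → X | ¬ p j = ω j} = ((fun p : ℕ → X => p j) ⁻¹' {ω j})ᶜ := by
          ext p; simp
        rw [he]; exact ((measurable_pi_apply j) (measurableSet_singleton (ω j))).compl
      rw [ae_iff]
      rw [evolve, Kernel.comp_apply' _ _ _ hS, step_apply,
        lintegral_map (Kernel.measurable_coe _ hS) (measurable_update ω)]
      have : ∀ y : X, evolve κ (k + 1) m (Function.update ω (k + 1) y)
          {p : ℕ → X | ¬ p j = ω j} = 0 := by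
        intro y
        have h1 : Function.update ω (k + 1) y j = ω j :=
          Function.update_of_ne (by omega) _ _
        have := ih (k + 1) j (by omega) (Function.update ω (k + 1) y)
        rw [ae_iff] at this
        simpa [h1] using this
      simp [this]



set_option linter.unusedSectionVars false in
private theorem main_aux [StandardBorelSpace X] [Nonempty U]
    (T : Kernel (X × U) X) [IsMarkovKernel T]
    (N : ℕ) (A : Set X) (hA : MeasurableSet A)
    (Wmin : ℕ → X → ℝ) (hWmeas : ∀ k, Measurable (Wmin k))
    (hWN : ∀ x, Wmin N x = A.indicator 1 x)
    (hW : ∀ k < N, ∀ x,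
      Wmin k x = ⨅ u : U, A.indicator (fun x' => ∫ y, Wmin (k + 1) y ∂(T (x', u))) x) :
    (∀ π : Policy X U, ∀ k ≤ N, ∀ ω : ℕ → X,
        Wmin k (ω k) ≤ ((evolve (π.kernel T) k (N - k) ω) (safeEvent A k N)).toReal) := by
  classical
  -- boundedness of Wmin
  have hbdd : ∀ m k, k + m = N → ∀ x, 0 ≤ Wmin k x ∧ Wmin k x ≤ 1 := by
    intro m
    induction m with
    | zero =>
        intro k hk x
        have hkN : k = N := by omega
        subst hkN
        rw [hWN]
        by_cases hx : x ∈ A <;> simp [Set.indicator_apply, hx]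
    | succ m ih =>
        intro k hk x
        have hkN : k < N := by omega
        rw [hW k hkN]
        have hint : ∀ u : U, ∀ x' : X, Integrable (Wmin (k + 1)) (T (x', u)) := by
          intro u x'
          refine ⟨(hWmeas (k + 1)).aestronglyMeasurable, ?_⟩
          refine HasFiniteIntegral.of_bounded (C := 1) (ae_of_all _ fun y => ?_)
          rw [Real.norm_eq_abs, abs_le]
          exact ⟨by linarith [(ih (k + 1) (by omega) y).1], (ih (k + 1) (by omega) y).2⟩
        have hterm : ∀ u : U,
            0 ≤ A.indicator (fun x' => ∫ y, Wmin (k + 1) y ∂(T (x', u))) x ∧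
            A.indicator (fun x' => ∫ y, Wmin (k + 1) y ∂(T (x', u))) x ≤ 1 := by
          intro u
          by_cases hx : x ∈ A
          · simp only [Set.indicator_of_mem hx]
            refine ⟨integral_nonneg fun y => (ih (k + 1) (by omega) y).1, ?_⟩
            calc ∫ y, Wmin (k + 1) y ∂(T (x, u))
                ≤ ∫ _, (1 : ℝ) ∂(T (x, u)) :=
                  integral_mono (hint u x) (integrable_const 1)
                    fun y => (ih (k + 1) (by omega) y).2
              _ = 1 := by simp
          · simp [Set.indicator_of_notMem hx]
        have hbb : BddBelow (Set.range fun u : U =>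
            A.indicator (fun x' => ∫ y, Wmin (k + 1) y ∂(T (x', u))) x) :=
          ⟨0, by rintro r ⟨u, rfl⟩; exact (hterm u).1⟩
        exact ⟨le_ciInf fun u => (hterm u).1,
          ciInf_le_of_le hbb (Classical.arbitrary U) (hterm _).2⟩
  -- main induction
  intro π
  suffices h : ∀ m k, k + m = N → ∀ ω : ℕ → X,
      Wmin k (ω k) ≤ ((evolve (π.kernel T) k m ω) (safeEvent A k N)).toReal by
    intro k hk ω
    have := h (N - k) k (by omega) ω
    simpa using this
  set κ := π.kernel T with hκ
  intro m
  induction m with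
  | zero =>
      intro k hk ω
      have hkN : k = N := by omega
      subst hkN
      rw [evolve, Kernel.id_apply,
        Measure.dirac_apply' _ (measurableSet_safeEvent hA k k), hWN]
      by_cases hx : ω k ∈ A
      · have hω : ω ∈ safeEvent A k k := by
          intro j h1 h2
          have hj : j = k := le_antisymm h2 h1
          rwa [hj]
        simp [Set.indicator_of_mem hx, Set.indicator_of_mem hω]
      · simp [Set.indicator_of_notMem hx]
  | succ m ih =>
      intro k hk ω
      have hkN : k < N := by omega
      have hS := measurableSet_safeEvent hA k N
      have hS' := measurableSet_safeEvent hA (k + 1) N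
      have hcomp : (evolve κ k (m + 1) ω) (safeEvent A k N)
          = ∫⁻ y, evolve κ (k + 1) m (Function.update ω (k + 1) y) (safeEvent A k N)
              ∂(κ k (ω k)) := by
        rw [evolve, Kernel.comp_apply' _ _ _ hS, step_apply,
          lintegral_map (Kernel.measurable_coe _ hS) (measurable_update ω)]
      by_cases hx : ω k ∈ A
      · have hν : ∀ y : X,
            evolve κ (k + 1) m (Function.update ω (k + 1) y) (safeEvent A k N)
            = evolve κ (k + 1) m (Function.update ω (k + 1) y) (safeEvent A (k + 1) N) := by
          intro y
          apply measure_congr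
          rw [Filter.eventuallyEq_set]
          filter_upwards [evolve_coord_ae κ m (k + 1) k (by omega)
            (Function.update ω (k + 1) y)] with p hp
          have hpk : p k = ω k := by rw [hp, Function.update_of_ne (by omega)]
          constructor
          · intro h j h1 h2; exact h j (by omega) h2
          · intro h j h1 h2
            rcases Nat.eq_or_lt_of_le h1 with rfl | hlt
            · rw [hpk]; exact hx
            · exact h j hlt h2
        have hptIH : ∀ y : X, Wmin (k + 1) y ≤
            (evolve κ (k + 1) m (Function.update ω (k + 1) y) (safeEvent A (k + 1) N)).toReal := by
          intro y
          have := ih (k + 1) (by omega) (Function.update ω (k + 1) y)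
          simpa [Function.update_self] using this
        have hκa : κ k (ω k) = T (ω k, π.act k (ω k)) := by
          rw [hκ]; exact Kernel.comap_apply _ _ _
        have h1 : Wmin k (ω k) ≤ ∫ y, Wmin (k + 1) y ∂(κ k (ω k)) := by
          rw [hW k hkN]
          have hbb : BddBelow (Set.range fun u : U =>
              A.indicator (fun x' => ∫ y, Wmin (k + 1) y ∂(T (x', u))) (ω k)) := by
            refine ⟨0, ?_⟩
            rintro r ⟨u, rfl⟩
            exact Set.indicator_nonneg
              (fun x' _ => integral_nonneg fun y => (hbdd m (k + 1) (by omega) y).1) _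
          refine le_trans (ciInf_le hbb (π.act k (ω k))) ?_
          rw [Set.indicator_of_mem hx, hκa]
        have hmeasν : Measurable fun y : X =>
            evolve κ (k + 1) m (Function.update ω (k + 1) y) (safeEvent A k N) :=
          (Kernel.measurable_coe _ hS).comp (measurable_update ω)
        have hint1 : Integrable (Wmin (k + 1)) (κ k (ω k)) := by
          refine ⟨(hWmeas (k + 1)).aestronglyMeasurable, ?_⟩
          refine HasFiniteIntegral.of_bounded (C := 1) (ae_of_all _ fun y => ?_)
          rw [Real.norm_eq_abs, abs_le]
          exact ⟨by linarith [(hbdd m (k + 1) (by omega) y).1],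
            (hbdd m (k + 1) (by omega) y).2⟩
        have hint2 : Integrable (fun y : X =>
            (evolve κ (k + 1) m (Function.update ω (k + 1) y) (safeEvent A k N)).toReal)
            (κ k (ω k)) := by
          refine ⟨(hmeasν.ennreal_toReal).aestronglyMeasurable, ?_⟩
          refine HasFiniteIntegral.of_bounded (C := 1) (ae_of_all _ fun y => ?_)
          rw [Real.norm_eq_abs, abs_of_nonneg ENNReal.toReal_nonneg]
          calc (evolve κ (k + 1) m (Function.update ω (k + 1) y) (safeEvent A k N)).toReal
              ≤ (ENNReal.toReal 1) := ENNReal.toReal_mono ENNReal.one_ne_top prob_le_one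
            _ = 1 := ENNReal.toReal_one
        have h2 : ∫ y, Wmin (k + 1) y ∂(κ k (ω k)) ≤
            ∫ y, (evolve κ (k + 1) m (Function.update ω (k + 1) y)
              (safeEvent A k N)).toReal ∂(κ k (ω k)) := by
          refine integral_mono hint1 hint2 fun y => ?_
          rw [hν y]; exact hptIH y
        have h3 : ∫ y, (evolve κ (k + 1) m (Function.update ω (k + 1) y)
              (safeEvent A k N)).toReal ∂(κ k (ω k))
            = ((evolve κ k (m + 1) ω) (safeEvent A k N)).toReal := by
          rw [hcomp, ← integral_toReal hmeasν.aemeasurable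
            (ae_of_all _ fun y => measure_lt_top _ _)]
        linarith
      · have hW0 : Wmin k (ω k) ≤ 0 := by
          rw [hW k hkN]
          have hbb : BddBelow (Set.range fun u : U =>
              A.indicator (fun x' => ∫ y, Wmin (k + 1) y ∂(T (x', u))) (ω k)) := by
            refine ⟨0, ?_⟩
            rintro r ⟨u, rfl⟩
            exact Set.indicator_nonneg
              (fun x' _ => integral_nonneg fun y => (hbdd m (k + 1) (by omega) y).1) _
          refine le_trans (ciInf_le hbb (Classical.arbitrary U)) ?_
          rw [Set.indicator_of_notMem hx]
        exact le_trans hW0 ENNReal.toReal_nonneg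


variable [StandardBorelSpace X] [TopologicalSpace U]
  [TopologicalSpace.MetrizableSpace U] [CompactSpace U] [Nonempty U] [BorelSpace U]

/-- Theorem 2, minimum invariance, lower bound: for every Markov policy
`π`, every `0 ≤ k ≤ N` and every `x`, the policy safety value
`V_k^π(x) = P_{k,x}^π(x_j ∈ A for all k ≤ j ≤ N)` is at least the minimal DP value
`W_k^min(x)`; consequently `inf_π V_k^π(x) ≥ W_k^min(x)`. -/
theorem policy_value_ge_min_dp_value
    (T : Kernel (X × U) X) [IsMarkovKernel T]
    (N : ℕ) (A : Set X) (hA : MeasurableSet A)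
    (Wmin : ℕ → X → ℝ) (hWmeas : ∀ k, Measurable (Wmin k))
    (hWN : ∀ x, Wmin N x = A.indicator 1 x)
    (hW : ∀ k < N, ∀ x,
      Wmin k x = ⨅ u : U, A.indicator (fun x' => ∫ y, Wmin (k + 1) y ∂(T (x', u))) x) :
    (∀ π : Policy X U, ∀ k ≤ N, ∀ x,
        Wmin k x ≤ (trajLaw T π N k x (safeEvent A k N)).toReal) ∧
    (∀ k ≤ N, ∀ x,
        Wmin k x ≤ ⨅ π : Policy X U, (trajLaw T π N k x (safeEvent A k N)).toReal) := by
  have h1 : ∀ π : Policy X U, ∀ k ≤ N, ∀ x : X,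
      Wmin k x ≤ (trajLaw T π N k x (safeEvent A k N)).toReal := by
    intro π k hk x
    simpa [trajLaw] using main_aux T N A hA Wmin hWmeas hWN hW π k hk (fun _ => x)
  refine ⟨h1, fun k hk x => ?_⟩
  have : Nonempty (Policy X U) :=
    ⟨⟨fun _ _ => Classical.arbitrary U, fun _ => measurable_const⟩⟩
  exact le_ciInf fun π => h1 π k hk x

end StochasticSafety
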